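/- Fix ℏ > 0 and define, for Ψ ∈ L¹(ℝ²; ℂ), the real quadratic form Q(Ψ) = ∫_{ℝ²×ℝ²} conj(Ψ(p_1,q_1)) Ψ(p_0,q_0) e^{(i/2ℏ)(p_0 q_1 − q_0 p_1)} dp_0 dq_0 dp_1 dq_1. Then there exists Ψ ∈ L¹(ℝ²; ℂ) with Q(Ψ) < 0. -/

import Mathlib

open MeasureTheory

/-- The path-integral squared norm (quadratic form) on the prequantum state space of
`T*ℝ ≅ ℝ²`:
`Q(Ψ) = ∫ conj(Ψ(p₁,q₁)) Ψ(p₀,q₀) e^{(i/2ℏ)(p₀q₁ − q₀p₁)} dp₀ dq₀ dp₁ dq₁`. -/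
noncomputable def pathIntegralNormSq (ℏ : ℝ) (Ψ : ℝ × ℝ → ℂ) : ℂ :=
  ∫ z : (ℝ × ℝ) × (ℝ × ℝ),
    (starRingEnd ℂ) (Ψ z.2) * Ψ z.1 *
      Complex.exp (Complex.I *
        (((z.1.1 * z.2.2 - z.1.2 * z.2.1) / (2 * ℏ) : ℝ) : ℂ))

section AuxNegativeNorm
open MeasureTheory Complex Filter Asymptotics Real Set


lemma gq_re (b : ℂ) (t x : ℝ) : (-b * (x:ℂ)^2 + I * t * x).re = -b.re * x^2 := by
  simp [Complex.add_re, Complex.mul_re, Complex.I_re, Complex.I_im, ← Complex.ofReal_pow]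

lemma gq_norm (b : ℂ) (t x : ℝ) : ‖Complex.exp (-b * (x:ℂ)^2 + I * t * x)‖ = Real.exp (-b.re * x^2) := by
  rw [Complex.norm_exp, gq_re]

lemma gq_integrable {b : ℂ} (hb : 0 < b.re) (t : ℝ) :
    Integrable (fun x : ℝ => Complex.exp (-b * (x:ℂ)^2 + I * t * x)) := by
  simpa using integrable_cexp_quadratic hb (I * t) 0

lemma gq_integrable_mul {b : ℂ} (hb : 0 < b.re) (t : ℝ) :
    Integrable (fun x : ℝ => (x:ℂ) * Complex.exp (-b * (x:ℂ)^2 + I * t * x)) := by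
  refine (integrable_mul_cexp_neg_mul_sq hb).norm.mono' ?_ ?_
  · apply Continuous.aestronglyMeasurable
    fun_prop
  · filter_upwards with x
    rw [norm_mul, gq_norm, norm_mul, Complex.norm_exp]
    simp [Complex.mul_re, ← Complex.ofReal_pow]

-- tendsto at ±∞
lemma gq_tendsto_top {b : ℂ} (hb : 0 < b.re) (t : ℝ) :
    Tendsto (fun x : ℝ => Complex.exp (-b * (x:ℂ)^2 + I * t * x)) atTop (nhds 0) := by
  rw [tendsto_zero_iff_norm_tendsto_zero]
  simp_rw [gq_norm]
  exact Real.tendsto_exp_atBot.comp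
    ((tendsto_pow_atTop two_ne_zero).const_mul_atTop_of_neg (neg_lt_zero.2 hb))

lemma gq_tendsto_bot {b : ℂ} (hb : 0 < b.re) (t : ℝ) :
    Tendsto (fun x : ℝ => Complex.exp (-b * (x:ℂ)^2 + I * t * x)) atBot (nhds 0) := by
  have := (gq_tendsto_top hb (-t)).comp tendsto_neg_atBot_atTop
  refine this.congr fun x => ?_
  show Complex.exp _ = _
  push_cast
  ring_nf

lemma gq_hasDeriv (b : ℂ) (t : ℝ) (x : ℝ) :
    HasDerivAt (fun x : ℝ => Complex.exp (-b * (x:ℂ)^2 + I * t * x))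
      ((-2*b*x + I*t) * Complex.exp (-b * (x:ℂ)^2 + I * t * x)) x := by
  have h : HasDerivAt (fun w : ℂ => Complex.exp (-b * w^2 + I * t * w))
      ((-2*b*x + I*t) * Complex.exp (-b * (x:ℂ)^2 + I * t * (x:ℂ))) (x:ℂ) := by
    have hd : HasDerivAt (fun w : ℂ => -b * w^2 + I * t * w)
        (-b * (2 * (x:ℂ)) + I * t) (x:ℂ) := by
      exact (((hasDerivAt_pow 2 (x:ℂ)).const_mul (-b)).add
        ((hasDerivAt_id (x:ℂ)).const_mul (I * (t:ℂ)))).congr_deriv (by ring)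
    have := hd.cexp
    convert this using 1
    case e'_9 => ring
    case e'_5 => rfl
  exact h.comp_ofReal

lemma gq_integral_deriv_zero {b : ℂ} (hb : 0 < b.re) (t : ℝ) :
    ∫ x : ℝ, (-2*b*(x:ℂ) + I*t) * Complex.exp (-b * (x:ℂ)^2 + I * t * x) = 0 := by
  have hint : Integrable (fun x : ℝ =>
      (-2*b*(x:ℂ) + I*t) * Complex.exp (-b * (x:ℂ)^2 + I * t * x)) := by
    have := ((gq_integrable_mul hb t).const_mul (-2*b)).add ((gq_integrable hb t).const_mul (I*t))
    refine this.congr (Filter.Eventually.of_forall fun x => ?_)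
    simp only [Pi.add_apply]
    ring
  rw [integral_of_hasDerivAt_of_tendsto (gq_hasDeriv b t) hint (gq_tendsto_bot hb t)
    (gq_tendsto_top hb t)]
  simp

lemma gq_moment {b : ℂ} (hb : 0 < b.re) (t : ℝ) :
    ∫ x : ℝ, (x:ℂ) * Complex.exp (-b * (x:ℂ)^2 + I * t * x)
      = (I * t / (2*b)) * ∫ x : ℝ, Complex.exp (-b * (x:ℂ)^2 + I * t * x) := by
  have hb0 : b ≠ 0 := fun h => by simp [h] at hb
  have h0 := gq_integral_deriv_zero hb t
  have hsplit : ∫ x : ℝ, (-2*b*(x:ℂ) + I*t) * Complex.exp (-b * (x:ℂ)^2 + I * t * x)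
      = (-2*b) * (∫ x : ℝ, (x:ℂ) * Complex.exp (-b * (x:ℂ)^2 + I * t * x))
        + (I*t) * ∫ x : ℝ, Complex.exp (-b * (x:ℂ)^2 + I * t * x) := by
    rw [← integral_const_mul, ← integral_const_mul, ← integral_add
      ((gq_integrable_mul hb t).const_mul _) ((gq_integrable hb t).const_mul _)]
    congr 1; funext x; ring
  rw [hsplit] at h0
  have := eq_neg_of_add_eq_zero_left h0
  field_simp at this ⊢
  linear_combination (-1) * this

lemma gq_integral {b : ℂ} (hb : 0 < b.re) (t : ℝ) :
    ∫ x : ℝ, Complex.exp (-b * (x:ℂ)^2 + I * t * x)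
      = (↑Real.pi / b) ^ (1/2 : ℂ) * Complex.exp (-(t:ℂ)^2 / (4*b)) := by
  have := fourierIntegral_gaussian hb (t : ℂ)
  rw [← this]
  congr 1; funext x
  rw [← Complex.exp_add]; ring_nf

noncomputable def psiNeg (ℏ : ℝ) (z : ℝ × ℝ) : ℂ :=
  ((z.1:ℂ) - Complex.I * z.2) *
    Complex.exp (-(((4*ℏ)⁻¹ : ℝ):ℂ) * ((z.1:ℂ)^2 + (z.2:ℂ)^2))

lemma psiNeg_cont (ℏ : ℝ) : Continuous (psiNeg ℏ) := by
  unfold psiNeg; fun_prop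

lemma psiNeg_eq (ℏ : ℝ) (z : ℝ × ℝ) :
    psiNeg ℏ z = ((z.1:ℂ) * Complex.exp (-(((4*ℏ)⁻¹ : ℝ):ℂ) * (z.1:ℂ)^2)) *
        Complex.exp (-(((4*ℏ)⁻¹ : ℝ):ℂ) * (z.2:ℂ)^2)
      - Complex.I * (Complex.exp (-(((4*ℏ)⁻¹ : ℝ):ℂ) * (z.1:ℂ)^2) *
        ((z.2:ℂ) * Complex.exp (-(((4*ℏ)⁻¹ : ℝ):ℂ) * (z.2:ℂ)^2))) := by
  unfold psiNeg
  rw [show -(((4*ℏ)⁻¹ : ℝ):ℂ) * ((z.1:ℂ)^2 + (z.2:ℂ)^2)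
      = -(((4*ℏ)⁻¹ : ℝ):ℂ) * (z.1:ℂ)^2 + -(((4*ℏ)⁻¹ : ℝ):ℂ) * (z.2:ℂ)^2 from by ring,
    Complex.exp_add]
  ring

lemma psiNeg_integrable {ℏ : ℝ} (hℏ : 0 < ℏ) : Integrable (psiNeg ℏ) := by
  have hb : 0 < ((((4*ℏ)⁻¹ : ℝ):ℂ)).re := by
    simp only [Complex.ofReal_re]; positivity
  have h0 : Integrable (fun x : ℝ => Complex.exp (-(((4*ℏ)⁻¹ : ℝ):ℂ) * (x:ℂ)^2)) :=
    integrable_cexp_neg_mul_sq hb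
  have h1 : Integrable (fun x : ℝ => (x:ℂ) * Complex.exp (-(((4*ℏ)⁻¹ : ℝ):ℂ) * (x:ℂ)^2)) :=
    integrable_mul_cexp_neg_mul_sq hb
  have : Integrable (fun z : ℝ × ℝ =>
      ((z.1:ℂ) * Complex.exp (-(((4*ℏ)⁻¹ : ℝ):ℂ) * (z.1:ℂ)^2)) *
        Complex.exp (-(((4*ℏ)⁻¹ : ℝ):ℂ) * (z.2:ℂ)^2)
      - Complex.I * (Complex.exp (-(((4*ℏ)⁻¹ : ℝ):ℂ) * (z.1:ℂ)^2) *
        ((z.2:ℂ) * Complex.exp (-(((4*ℏ)⁻¹ : ℝ):ℂ) * (z.2:ℂ)^2)))) := by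
    rw [MeasureTheory.Measure.volume_eq_prod]
    exact (h1.mul_prod h0).sub ((h0.mul_prod h1).const_mul Complex.I)
  exact this.congr (Filter.Eventually.of_forall fun z => (psiNeg_eq ℏ z).symm)

lemma psiNeg_conj {ℏ : ℝ} (z : ℝ × ℝ) :
    (starRingEnd ℂ) (psiNeg ℏ z) = ((z.1:ℂ) + Complex.I * z.2) *
      Complex.exp (-(((4*ℏ)⁻¹ : ℝ):ℂ) * ((z.1:ℂ)^2 + (z.2:ℂ)^2)) := by
  unfold psiNeg
  rw [map_mul, ← Complex.exp_conj]
  congr 1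
  · simp [map_sub, map_mul, Complex.conj_ofReal, Complex.conj_I]
  · simp [map_mul, map_add, map_neg, map_pow, Complex.conj_ofReal, map_ofNat]

lemma inner_eval {ℏ : ℝ} (hℏ : 0 < ℏ) (a : ℝ × ℝ) :
    ∫ y : ℝ × ℝ, (starRingEnd ℂ) (psiNeg ℏ y) *
        Complex.exp (Complex.I * (((a.1 * y.2 - a.2 * y.1) / (2*ℏ) : ℝ):ℂ))
      = -(4*Real.pi*ℏ) * (starRingEnd ℂ) (psiNeg ℏ a) := by
  have hhne : (ℏ:ℂ) ≠ 0 := Complex.ofReal_ne_zero.mpr hℏ.ne'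
  have hb : 0 < ((((4*ℏ)⁻¹ : ℝ):ℂ)).re := by simp only [Complex.ofReal_re]; positivity
  have hbne : ((((4*ℏ)⁻¹ : ℝ):ℂ)) ≠ 0 := by
    simp only [ne_eq, Complex.ofReal_eq_zero]; positivity
  have hpt : ∀ y : ℝ × ℝ, (starRingEnd ℂ) (psiNeg ℏ y) *
        Complex.exp (Complex.I * (((a.1 * y.2 - a.2 * y.1) / (2*ℏ) : ℝ):ℂ))
      = ((y.1:ℂ) * Complex.exp (-(((4*ℏ)⁻¹ : ℝ):ℂ) * (y.1:ℂ)^2 + Complex.I * ((-(a.2/(2*ℏ)):ℝ):ℂ) * (y.1:ℂ)))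
          * Complex.exp (-(((4*ℏ)⁻¹ : ℝ):ℂ) * (y.2:ℂ)^2 + Complex.I * ((a.1/(2*ℏ):ℝ):ℂ) * (y.2:ℂ))
        + Complex.I * (Complex.exp (-(((4*ℏ)⁻¹ : ℝ):ℂ) * (y.1:ℂ)^2 + Complex.I * ((-(a.2/(2*ℏ)):ℝ):ℂ) * (y.1:ℂ))
          * ((y.2:ℂ) * Complex.exp (-(((4*ℏ)⁻¹ : ℝ):ℂ) * (y.2:ℂ)^2 + Complex.I * ((a.1/(2*ℏ):ℝ):ℂ) * (y.2:ℂ)))) := by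
    intro y
    rw [psiNeg_conj]
    have e1 : Complex.I * (((a.1 * y.2 - a.2 * y.1) / (2*ℏ) : ℝ):ℂ)
        = Complex.I * ((-(a.2/(2*ℏ)):ℝ):ℂ) * (y.1:ℂ) + Complex.I * ((a.1/(2*ℏ):ℝ):ℂ) * (y.2:ℂ) := by
      push_cast
      field_simp
      ring
    rw [e1]
    rw [show -(((4*ℏ)⁻¹ : ℝ):ℂ) * ((y.1:ℂ)^2 + (y.2:ℂ)^2)
        = -(((4*ℏ)⁻¹ : ℝ):ℂ) * (y.1:ℂ)^2 + -(((4*ℏ)⁻¹ : ℝ):ℂ) * (y.2:ℂ)^2 from by ring]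
    simp only [Complex.exp_add]
    ring
  rw [integral_congr_ae (Filter.Eventually.of_forall hpt)]
  rw [MeasureTheory.Measure.volume_eq_prod]
  have hiA := gq_integrable_mul hb (-(a.2/(2*ℏ)))
  have hiB := gq_integrable hb (-(a.2/(2*ℏ)))
  have hiC := gq_integrable hb (a.1/(2*ℏ))
  have hiD := gq_integrable_mul hb (a.1/(2*ℏ))
  rw [integral_add (hiA.mul_prod hiC) ((hiB.mul_prod hiD).const_mul Complex.I),
    integral_const_mul,
    integral_prod_mul (fun x : ℝ => (x:ℂ) * Complex.exp (-(((4*ℏ)⁻¹ : ℝ):ℂ) * (x:ℂ)^2 + Complex.I * ((-(a.2/(2*ℏ)):ℝ):ℂ) * (x:ℂ)))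
      (fun x : ℝ => Complex.exp (-(((4*ℏ)⁻¹ : ℝ):ℂ) * (x:ℂ)^2 + Complex.I * ((a.1/(2*ℏ):ℝ):ℂ) * (x:ℂ))),
    integral_prod_mul (fun x : ℝ => Complex.exp (-(((4*ℏ)⁻¹ : ℝ):ℂ) * (x:ℂ)^2 + Complex.I * ((-(a.2/(2*ℏ)):ℝ):ℂ) * (x:ℂ)))
      (fun x : ℝ => (x:ℂ) * Complex.exp (-(((4*ℏ)⁻¹ : ℝ):ℂ) * (x:ℂ)^2 + Complex.I * ((a.1/(2*ℏ):ℝ):ℂ) * (x:ℂ)))]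
  rw [gq_moment hb (-(a.2/(2*ℏ))), gq_moment hb (a.1/(2*ℏ)),
    gq_integral hb (-(a.2/(2*ℏ))), gq_integral hb (a.1/(2*ℏ))]
  rw [psiNeg_conj]
  have hπb : ((Real.pi:ℂ)/(((4*ℏ)⁻¹ : ℝ):ℂ)) ≠ 0 :=
    div_ne_zero (Complex.ofReal_ne_zero.mpr Real.pi_ne_zero) hbne
  have hK : (((Real.pi:ℂ)/(((4*ℏ)⁻¹ : ℝ):ℂ)) ^ (1/2:ℂ)) * (((Real.pi:ℂ)/(((4*ℏ)⁻¹ : ℝ):ℂ)) ^ (1/2:ℂ))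
      = (Real.pi:ℂ)/(((4*ℏ)⁻¹ : ℝ):ℂ) := by
    rw [← Complex.cpow_add _ _ hπb]
    norm_num
  have hexp : Complex.exp (-((-(a.2/(2*ℏ)):ℝ):ℂ)^2/(4*(((4*ℏ)⁻¹ : ℝ):ℂ)))
        * Complex.exp (-((a.1/(2*ℏ):ℝ):ℂ)^2/(4*(((4*ℏ)⁻¹ : ℝ):ℂ)))
      = Complex.exp (-(((4*ℏ)⁻¹ : ℝ):ℂ) * ((a.1:ℂ)^2 + (a.2:ℂ)^2)) := by
    rw [← Complex.exp_add]
    congr 1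
    push_cast
    field_simp
    ring
  have hcoef : (Complex.I * ((-(a.2/(2*ℏ)):ℝ):ℂ) / (2*(((4*ℏ)⁻¹ : ℝ):ℂ))
        + Complex.I * (Complex.I * ((a.1/(2*ℏ):ℝ):ℂ) / (2*(((4*ℏ)⁻¹ : ℝ):ℂ))))
        * ((Real.pi:ℂ)/(((4*ℏ)⁻¹ : ℝ):ℂ))
      = -(4*(Real.pi:ℂ)*(ℏ:ℂ)) * ((a.1:ℂ) + Complex.I * (a.2:ℂ)) := by
    push_cast
    field_simp
    linear_combination (4 * (a.1:ℂ)) * Complex.I_sq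
  set S : ℂ := Complex.I * ((-(a.2/(2*ℏ)):ℝ):ℂ) / (2*(((4*ℏ)⁻¹ : ℝ):ℂ))
        + Complex.I * (Complex.I * ((a.1/(2*ℏ):ℝ):ℂ) / (2*(((4*ℏ)⁻¹ : ℝ):ℂ))) with hS
  set K : ℂ := ((Real.pi:ℂ)/(((4*ℏ)⁻¹ : ℝ):ℂ)) ^ (1/2:ℂ) with hKdef
  set E : ℂ := Complex.exp (-(((4*ℏ)⁻¹ : ℝ):ℂ) * ((a.1:ℂ)^2 + (a.2:ℂ)^2)) with hE
  linear_combination (S*(K*K))*hexp + (S*E)*hK + E*hcoef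

lemma psiNeg_normSq (ℏ : ℝ) (a : ℝ × ℝ) :
    Complex.normSq (psiNeg ℏ a)
      = (a.1^2 * Real.exp (-(2*(4*ℏ)⁻¹) * a.1^2)) * Real.exp (-(2*(4*ℏ)⁻¹) * a.2^2)
        + Real.exp (-(2*(4*ℏ)⁻¹) * a.1^2) * (a.2^2 * Real.exp (-(2*(4*ℏ)⁻¹) * a.2^2)) := by
  unfold psiNeg
  have h1 : Complex.normSq ((a.1:ℂ) - Complex.I * a.2) = a.1^2 + a.2^2 := by
    simp [Complex.normSq_apply]
    ring
  have h2 : (-(((4*ℏ)⁻¹ : ℝ):ℂ) * ((a.1:ℂ)^2 + (a.2:ℂ)^2)).re = -(4*ℏ)⁻¹ * (a.1^2 + a.2^2) := by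
    simp [← Complex.ofReal_pow, ← Complex.ofReal_add]
  have h3 : Complex.normSq (Complex.exp (-(((4*ℏ)⁻¹ : ℝ):ℂ) * ((a.1:ℂ)^2 + (a.2:ℂ)^2)))
      = Real.exp (-(2*(4*ℏ)⁻¹) * a.1^2) * Real.exp (-(2*(4*ℏ)⁻¹) * a.2^2) := by
    rw [Complex.normSq_eq_norm_sq, Complex.norm_exp, h2, sq, ← Real.exp_add, ← Real.exp_add]
    congr 1
    ring
  rw [Complex.normSq_mul, h1, h3]
  ring

lemma psiNeg_normSq_integrable {ℏ : ℝ} (hℏ : 0 < ℏ) :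
    Integrable (fun a : ℝ × ℝ => Complex.normSq (psiNeg ℏ a)) := by
  have hk : (0:ℝ) < 2*(4*ℏ)⁻¹ := by positivity
  have hg : Integrable (fun x : ℝ => Real.exp (-(2*(4*ℏ)⁻¹) * x^2)) :=
    integrable_exp_neg_mul_sq hk
  have hx2 : Integrable (fun x : ℝ => x^2 * Real.exp (-(2*(4*ℏ)⁻¹) * x^2)) := by
    have h := integrable_rpow_mul_exp_neg_mul_sq hk (s := ((2:ℕ):ℝ)) (by norm_num)
    refine h.congr (Filter.Eventually.of_forall fun x => ?_)
    exact congrArg (fun u => u * Real.exp (-(2*(4*ℏ)⁻¹) * x^2)) (Real.rpow_natCast x 2)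
  have : Integrable (fun a : ℝ × ℝ =>
      (a.1^2 * Real.exp (-(2*(4*ℏ)⁻¹) * a.1^2)) * Real.exp (-(2*(4*ℏ)⁻¹) * a.2^2)
        + Real.exp (-(2*(4*ℏ)⁻¹) * a.1^2) * (a.2^2 * Real.exp (-(2*(4*ℏ)⁻¹) * a.2^2))) := by
    rw [MeasureTheory.Measure.volume_eq_prod]
    exact (hx2.mul_prod hg).add (hg.mul_prod hx2)
  exact this.congr (Filter.Eventually.of_forall fun a => (psiNeg_normSq ℏ a).symm)

lemma psiNeg_normSq_pos {ℏ : ℝ} (hℏ : 0 < ℏ) :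
    0 < ∫ a : ℝ × ℝ, Complex.normSq (psiNeg ℏ a) := by
  rw [integral_pos_iff_support_of_nonneg (fun a => Complex.normSq_nonneg _)
    (psiNeg_normSq_integrable hℏ)]
  have hsub : (Set.Ioo (0:ℝ) 1) ×ˢ (Set.Ioo (0:ℝ) 1) ⊆
      Function.support (fun a : ℝ × ℝ => Complex.normSq (psiNeg ℏ a)) := by
    rintro ⟨x, y⟩ ⟨hx, hy⟩
    simp only [Function.mem_support, ne_eq, Complex.normSq_eq_zero]
    unfold psiNeg
    refine mul_ne_zero ?_ (Complex.exp_ne_zero _)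
    intro h
    have := congrArg Complex.re h
    simp at this
    exact absurd this (ne_of_gt hx.1)
  refine lt_of_lt_of_le ?_ (measure_mono hsub)
  rw [MeasureTheory.Measure.volume_eq_prod, MeasureTheory.Measure.prod_prod, Real.volume_Ioo]
  norm_num

end AuxNegativeNorm

open Complex Real in
/-- The prequantum state space contains states of negative norm: there is an integrable
`Ψ` with `Q(Ψ) < 0` (a negative real number). -/
theorem exists_state_of_negative_norm (ℏ : ℝ) (hℏ : 0 < ℏ) :
    ∃ Ψ : ℝ × ℝ → ℂ, Integrable Ψ ∧
      ∃ r : ℝ, r < 0 ∧ pathIntegralNormSq ℏ Ψ = (r : ℂ) := by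
  refine ⟨psiNeg ℏ, psiNeg_integrable hℏ,
    -(4*Real.pi*ℏ) * ∫ a : ℝ × ℝ, Complex.normSq (psiNeg ℏ a), ?_, ?_⟩
  · have h1 : -(4*Real.pi*ℏ) < 0 := by
      have := Real.pi_pos; nlinarith
    exact mul_neg_of_neg_of_pos h1 (psiNeg_normSq_pos hℏ)
  · unfold pathIntegralNormSq
    have hcont : Continuous (fun z : (ℝ × ℝ) × (ℝ × ℝ) =>
        (starRingEnd ℂ) (psiNeg ℏ z.2) * psiNeg ℏ z.1 *
          Complex.exp (Complex.I *
            (((z.1.1 * z.2.2 - z.1.2 * z.2.1) / (2 * ℏ) : ℝ) : ℂ))) := by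
      refine Continuous.mul (Continuous.mul ?_ ((psiNeg_cont ℏ).comp continuous_fst)) ?_
      · exact Complex.continuous_conj.comp ((psiNeg_cont ℏ).comp continuous_snd)
      · fun_prop
    have h4 : Integrable (fun z : (ℝ × ℝ) × (ℝ × ℝ) =>
        (starRingEnd ℂ) (psiNeg ℏ z.2) * psiNeg ℏ z.1 *
          Complex.exp (Complex.I *
            (((z.1.1 * z.2.2 - z.1.2 * z.2.1) / (2 * ℏ) : ℝ) : ℂ)))
        ((volume : Measure (ℝ × ℝ)).prod (volume : Measure (ℝ × ℝ))) := by
      refine Integrable.mono'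
        (g := fun z : (ℝ × ℝ) × (ℝ × ℝ) => ‖psiNeg ℏ z.1‖ * ‖psiNeg ℏ z.2‖)
        ((psiNeg_integrable hℏ).norm.mul_prod (psiNeg_integrable hℏ).norm)
        hcont.aestronglyMeasurable ?_
      · filter_upwards with z
        rw [norm_mul, norm_mul, RCLike.norm_conj]
        have h1 : ∀ r : ℝ, ‖Complex.exp (Complex.I * (r:ℂ))‖ = 1 := fun r => by
          rw [Complex.norm_exp]
          simp [Complex.mul_re]
        rw [h1, mul_one]
        exact le_of_eq (mul_comm _ _)
    rw [MeasureTheory.Measure.volume_eq_prod, integral_prod _ h4]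
    have hinner : ∀ a : ℝ × ℝ, (∫ y : ℝ × ℝ,
        (starRingEnd ℂ) (psiNeg ℏ y) * psiNeg ℏ a *
          Complex.exp (Complex.I * (((a.1 * y.2 - a.2 * y.1) / (2 * ℏ) : ℝ) : ℂ)))
        = psiNeg ℏ a * (-(4*Real.pi*ℏ) * (starRingEnd ℂ) (psiNeg ℏ a)) := by
      intro a
      have : (fun y : ℝ × ℝ =>
          (starRingEnd ℂ) (psiNeg ℏ y) * psiNeg ℏ a *
            Complex.exp (Complex.I * (((a.1 * y.2 - a.2 * y.1) / (2 * ℏ) : ℝ) : ℂ)))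
          = (fun y : ℝ × ℝ => psiNeg ℏ a * ((starRingEnd ℂ) (psiNeg ℏ y) *
            Complex.exp (Complex.I * (((a.1 * y.2 - a.2 * y.1) / (2 * ℏ) : ℝ) : ℂ)))) := by
        funext y; ring
      rw [this, integral_const_mul, inner_eval hℏ a]
    calc (∫ a : ℝ × ℝ, ∫ y : ℝ × ℝ,
          (starRingEnd ℂ) (psiNeg ℏ y) * psiNeg ℏ a *
            Complex.exp (Complex.I * (((a.1 * y.2 - a.2 * y.1) / (2 * ℏ) : ℝ) : ℂ)))
        = ∫ a : ℝ × ℝ, psiNeg ℏ a * (-(4*Real.pi*ℏ) * (starRingEnd ℂ) (psiNeg ℏ a)) :=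
          integral_congr_ae (Filter.Eventually.of_forall hinner)
      _ = (-(4*Real.pi*ℏ) : ℂ) * ∫ a : ℝ × ℝ, psiNeg ℏ a * (starRingEnd ℂ) (psiNeg ℏ a) := by
          rw [← integral_const_mul]
          congr 1; funext a; ring
      _ = (-(4*Real.pi*ℏ) : ℂ) * ∫ a : ℝ × ℝ, (Complex.normSq (psiNeg ℏ a) : ℂ) := by
          congr 1
          exact integral_congr_ae (Filter.Eventually.of_forall fun a => by
            show psiNeg ℏ a * (starRingEnd ℂ) (psiNeg ℏ a) = ((Complex.normSq (psiNeg ℏ a) : ℝ) : ℂ)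
            rw [Complex.mul_conj])
      _ = (-(4*Real.pi*ℏ) : ℂ) * ((∫ a : ℝ × ℝ, Complex.normSq (psiNeg ℏ a) : ℝ) : ℂ) := by
          congr 1
          exact integral_ofReal
      _ = ((-(4*Real.pi*ℏ) * ∫ a : ℝ × ℝ, Complex.normSq (psiNeg ℏ a) : ℝ) : ℂ) := by
          push_cast; ring
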